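/- Let 𝔼 be a finite-dimensional Banach space and N : [0,1] × 𝔼 → [0,∞) a continuous function such that N_t := N(t,·) is a norm on 𝔼 for each t ∈ [0,1]. Define ‖u‖_{N,1} := ∫₀¹ N_t(u(t)) dt on L¹([0,1]; 𝔼) and ‖w‖_{N*,∞} := ess sup_t N_t*(w(t)) on L^∞([0,1]; 𝔼*), where N_t* is the dual norm of N_t. Then the dual norm of ‖·‖_{N,1} on L^∞([0,1]; 𝔼*) equals ‖·‖_{N*,∞}. -/

import Mathlib

open MeasureTheory Set Filter Topology
open scoped ENNReal NNReal

private lemma aux_pi_mem (t : ℝ) : min (max t 0) 1 ∈ Set.Icc (0:ℝ) 1 :=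
  ⟨le_min (le_max_right _ _) zero_le_one, min_le_right _ _⟩

private lemma aux_pi_eq {t : ℝ} (ht : t ∈ Set.Icc (0:ℝ) 1) : min (max t 0) 1 = t := by
  rw [max_eq_left ht.1, min_eq_left ht.2]

private lemma aux_cont {E : Type*} [NormedAddCommGroup E] [NormedSpace ℝ E]
    {N : ℝ → E → ℝ}
    (hNc : ContinuousOn (Function.uncurry N) (Set.Icc 0 1 ×ˢ Set.univ)) :
    Continuous (fun p : ℝ × E => N (min (max p.1 0) 1) p.2) := by
  have h1 : Continuous (fun p : ℝ × E =>
      (⟨(min (max p.1 0) 1, p.2), by exact ⟨aux_pi_mem _, trivial⟩⟩ :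
        (Set.Icc (0:ℝ) 1 ×ˢ (Set.univ : Set E)))) := by
    apply Continuous.subtype_mk
    exact ((continuous_fst.max continuous_const).min continuous_const).prodMk continuous_snd
  have h2 := continuousOn_iff_continuous_restrict.mp hNc
  exact h2.comp h1

/-- uniform norm-equivalence bounds -/
private lemma aux_bounds {E : Type*} [NormedAddCommGroup E] [NormedSpace ℝ E]
    [FiniteDimensional ℝ E] {N : ℝ → E → ℝ}
    (hNc : ContinuousOn (Function.uncurry N) (Set.Icc 0 1 ×ˢ Set.univ))
    (hN0 : ∀ t ∈ Set.Icc (0:ℝ) 1, ∀ v : E, 0 ≤ N t v)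
    (hNeq : ∀ t ∈ Set.Icc (0:ℝ) 1, ∀ v : E, N t v = 0 ↔ v = 0)
    (hNsmul : ∀ t ∈ Set.Icc (0:ℝ) 1, ∀ (c : ℝ) (v : E), N t (c • v) = |c| * N t v) :
    ∃ c₀ > (0:ℝ), ∃ C₁ : ℝ, ∀ t ∈ Set.Icc (0:ℝ) 1, ∀ v : E,
      c₀ * ‖v‖ ≤ N t v ∧ N t v ≤ C₁ * ‖v‖ := by
  have hzero : ∀ t ∈ Set.Icc (0:ℝ) 1, N t (0:E) = 0 := fun t ht =>
    (hNeq t ht 0).mpr rfl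
  by_cases hE : ∃ v : E, v ≠ 0
  · obtain ⟨v₁, hv₁⟩ := hE
    have hsph : (Metric.sphere (0:E) 1).Nonempty := by
      refine ⟨‖v₁‖⁻¹ • v₁, ?_⟩
      simp [norm_smul, abs_inv, abs_norm, inv_mul_cancel₀ (norm_ne_zero_iff.mpr hv₁)]
    set K : Set (ℝ × E) := Set.Icc (0:ℝ) 1 ×ˢ Metric.sphere (0:E) 1 with hK
    have hKc : IsCompact K := (isCompact_Icc).prod (isCompact_sphere 0 1)
    have hKne : K.Nonempty := ⟨(0, hsph.choose), ⟨⟨le_rfl, zero_le_one⟩, hsph.choose_spec⟩⟩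
    have hcont : ContinuousOn (Function.uncurry N) K :=
      hNc.mono (by intro p hp; exact ⟨hp.1, trivial⟩)
    obtain ⟨a, haK, hamin⟩ := hKc.exists_isMinOn hKne hcont
    obtain ⟨b, hbK, hbmax⟩ := hKc.exists_isMaxOn hKne hcont
    have ha2 : a.2 ≠ 0 := by
      have : ‖a.2‖ = 1 := by simpa using haK.2
      intro h; rw [h] at this; simp at this
    have hc₀pos : 0 < N a.1 a.2 := by
      rcases (hN0 a.1 haK.1 a.2).lt_or_eq with h | h
      · exact h
      · exact (ha2 ((hNeq a.1 haK.1 a.2).mp h.symm)).elim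
    refine ⟨N a.1 a.2, hc₀pos, N b.1 b.2, fun t ht v => ?_⟩
    by_cases hv : v = 0
    · subst hv; simp [hzero t ht]
    · have hvn : ‖v‖ ≠ 0 := norm_ne_zero_iff.mpr hv
      have hmem : (t, ‖v‖⁻¹ • v) ∈ K := by
        refine ⟨ht, ?_⟩
        simp [norm_smul, abs_inv, abs_norm, inv_mul_cancel₀ hvn]
      have hNv : N t v = ‖v‖ * N t (‖v‖⁻¹ • v) := by
        have : v = ‖v‖ • (‖v‖⁻¹ • v) := by
          rw [smul_smul, mul_inv_cancel₀ hvn, one_smul]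
        calc N t v = N t (‖v‖ • (‖v‖⁻¹ • v)) := by rw [← this]
          _ = |‖v‖| * N t (‖v‖⁻¹ • v) := hNsmul t ht _ _
          _ = ‖v‖ * N t (‖v‖⁻¹ • v) := by rw [abs_norm]
      constructor
      · rw [hNv, mul_comm (N a.1 a.2)]
        exact mul_le_mul_of_nonneg_left (hamin hmem) (norm_nonneg v)
      · rw [hNv, mul_comm (N b.1 b.2)]
        exact mul_le_mul_of_nonneg_left (hbmax hmem) (norm_nonneg v)
  · push_neg at hE
    refine ⟨1, one_pos, 1, fun t ht v => ?_⟩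
    rw [hE v]; simp [hzero t ht]

set_option maxHeartbeats 2000000 in
theorem stmt_2 {E : Type*} [NormedAddCommGroup E] [NormedSpace ℝ E] [FiniteDimensional ℝ E]
    (N : ℝ → E → ℝ)
    (hNc : ContinuousOn (Function.uncurry N) (Set.Icc 0 1 ×ˢ Set.univ))
    (hN0 : ∀ t ∈ Set.Icc (0:ℝ) 1, ∀ v : E, 0 ≤ N t v)
    (hNeq : ∀ t ∈ Set.Icc (0:ℝ) 1, ∀ v : E, N t v = 0 ↔ v = 0)
    (hNsmul : ∀ t ∈ Set.Icc (0:ℝ) 1, ∀ (c : ℝ) (v : E), N t (c • v) = |c| * N t v)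
    (hNadd : ∀ t ∈ Set.Icc (0:ℝ) 1, ∀ v w : E, N t (v + w) ≤ N t v + N t w)
    (w : ℝ → E →L[ℝ] ℝ)
    (hw : MemLp w ⊤ (volume.restrict (Set.Icc (0:ℝ) 1))) :
    sSup { r : ℝ | ∃ u : ℝ → E, IntegrableOn u (Set.Icc 0 1) volume ∧
        (∫ t in Set.Icc (0:ℝ) 1, N t (u t)) ≤ 1 ∧
        r = ∫ t in Set.Icc (0:ℝ) 1, w t (u t) } =
      essSup (fun t => sSup { r : ℝ | ∃ v : E, N t v ≤ 1 ∧ r = w t v })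
        (volume.restrict (Set.Icc (0:ℝ) 1)) := by
  classical
  set I : Set ℝ := Set.Icc (0:ℝ) 1 with hIdef
  set μ₀ : Measure ℝ := volume.restrict I with hμdef
  set D : ℝ → Set ℝ := fun t => { r : ℝ | ∃ v : E, N t v ≤ 1 ∧ r = w t v } with hDdef
  set g : ℝ → ℝ := fun t => sSup (D t) with hgdef
  set S : Set ℝ := { r : ℝ | ∃ u : ℝ → E, IntegrableOn u I volume ∧
      (∫ t in I, N t (u t)) ≤ 1 ∧ r = ∫ t in I, w t (u t) } with hSdef
  show sSup S = essSup g μ₀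
  obtain ⟨c₀, hc₀, C₁, hbd⟩ := aux_bounds hNc hN0 hNeq hNsmul
  have hμuniv : μ₀ Set.univ = 1 := by
    rw [hμdef, Measure.restrict_apply_univ, hIdef, Real.volume_Icc]; norm_num
  have hμne : μ₀ ≠ 0 := by
    intro h; rw [h] at hμuniv; simp at hμuniv
  haveI hne : (ae μ₀).NeBot := ae_neBot.2 hμne
  have hmem : ∀ᵐ t ∂μ₀, t ∈ I := ae_restrict_mem measurableSet_Icc
  set R : ℝ := (eLpNorm w ⊤ μ₀).toReal with hRdef
  have hR : ∀ᵐ t ∂μ₀, ‖w t‖ ≤ R := by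
    have hlt : eLpNormEssSup w μ₀ < ⊤ := by
      rw [← eLpNorm_exponent_top]; exact hw.2
    filter_upwards [ae_le_eLpNormEssSup (f := w) (μ := μ₀)] with t ht
    have : ((‖w t‖₊ : ℝ≥0∞)).toReal ≤ (eLpNormEssSup w μ₀).toReal :=
      ENNReal.toReal_mono hlt.ne ht
    simpa [hRdef, eLpNorm_exponent_top] using this
  -- basic facts about the dual-norm sets
  have hzeroMem : ∀ t ∈ I, (0:ℝ) ∈ D t := by
    intro t ht
    exact ⟨0, by rw [(hNeq t ht 0).2 rfl]; exact zero_le_one, by simp⟩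
  have hub : ∀ t ∈ I, ∀ r ∈ D t, r ≤ ‖w t‖ / c₀ := by
    rintro t ht r ⟨v, hv, rfl⟩
    have h1 : w t v ≤ ‖w t‖ * ‖v‖ := (le_abs_self _).trans ((w t).le_opNorm v)
    have h2 : ‖v‖ ≤ 1 / c₀ := by
      have := (hbd t ht v).1
      rw [le_div_iff₀ hc₀, mul_comm]
      exact this.trans hv
    calc w t v ≤ ‖w t‖ * ‖v‖ := h1
      _ ≤ ‖w t‖ * (1 / c₀) := mul_le_mul_of_nonneg_left h2 (norm_nonneg _)
      _ = ‖w t‖ / c₀ := by ring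
  have hbdda : ∀ t ∈ I, BddAbove (D t) := fun t ht => ⟨‖w t‖ / c₀, fun r hr => hub t ht r hr⟩
  have hg0 : ∀ t ∈ I, 0 ≤ g t := fun t ht => le_csSup (hbdda t ht) (hzeroMem t ht)
  have hgle : ∀ t ∈ I, g t ≤ ‖w t‖ / c₀ := fun t ht =>
    csSup_le ⟨0, hzeroMem t ht⟩ (hub t ht)
  have hkey : ∀ t ∈ I, ∀ v : E, w t v ≤ g t * N t v := by
    intro t ht v
    by_cases hv0 : N t v = 0
    · have hv : v = 0 := (hNeq t ht v).1 hv0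
      subst hv
      simp [hv0]
    · have hpos : 0 < N t v := (hN0 t ht v).lt_of_ne (Ne.symm hv0)
      have hmem' : w t ((N t v)⁻¹ • v) ∈ D t := by
        refine ⟨(N t v)⁻¹ • v, ?_, rfl⟩
        rw [hNsmul t ht, abs_of_pos (inv_pos.2 hpos), inv_mul_cancel₀ hv0]
      have hle := le_csSup (hbdda t ht) hmem'
      have hsplit : w t v = N t v * w t ((N t v)⁻¹ • v) := by
        rw [ContinuousLinearMap.map_smul, smul_eq_mul]
        field_simp
      rw [hsplit, mul_comm (g t)]
      exact mul_le_mul_of_nonneg_left hle hpos.le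
  -- integrability
  have hInt : ∀ u : ℝ → E, IntegrableOn u I volume →
      Integrable (fun t => N t (u t)) μ₀ ∧ Integrable (fun t => w t (u t)) μ₀ := by
    intro u hu
    have hum : AEStronglyMeasurable u μ₀ := hu.aestronglyMeasurable
    have hmN : AEStronglyMeasurable (fun t => N t (u t)) μ₀ := by
      have h1 := (aux_cont hNc).comp_aestronglyMeasurable
        (aestronglyMeasurable_id.prodMk hum)
      refine h1.congr (hmem.mono fun t ht => ?_)
      simp only [id_eq, aux_pi_eq ht]
    have hmW : AEStronglyMeasurable (fun t => w t (u t)) μ₀ :=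
      isBoundedBilinearMap_apply.continuous.comp_aestronglyMeasurable
        (hw.1.prodMk hum)
    constructor
    · refine Integrable.mono' (hu.norm.const_mul C₁) hmN ?_
      filter_upwards [hmem] with t ht
      rw [Real.norm_eq_abs, abs_of_nonneg (hN0 t ht _)]
      exact (hbd t ht (u t)).2
    · refine Integrable.mono' (hu.norm.const_mul R) hmW ?_
      filter_upwards [hmem, hR] with t ht hRt
      calc ‖w t (u t)‖ ≤ ‖w t‖ * ‖u t‖ := (w t).le_opNorm _
        _ ≤ R * ‖u t‖ := mul_le_mul_of_nonneg_right hRt (norm_nonneg _)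
  -- essSup facts
  have hBddU : IsBoundedUnder (· ≤ ·) (ae μ₀) g := by
    refine ⟨R / c₀, eventually_map.mpr ?_⟩
    filter_upwards [hmem, hR] with t ht hRt
    exact (hgle t ht).trans (div_le_div_of_nonneg_right hRt hc₀.le)
  have hesslim : essSup g μ₀ = limsup g (ae μ₀) := rfl
  have hgEs : ∀ᵐ t ∂μ₀, g t ≤ essSup g μ₀ := by
    rw [hesslim]
    exact eventually_le_limsup hBddU
  have hesspos : 0 ≤ essSup g μ₀ := by
    rw [hesslim]
    exact le_limsup_of_frequently_le
      ((hmem.mono fun t ht => hg0 t ht).frequently) hBddU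
  -- upper bound
  have hupper : ∀ r ∈ S, r ≤ essSup g μ₀ := by
    rintro r ⟨u, hu, hN1, rfl⟩
    obtain ⟨hNint, hwint⟩ := hInt u hu
    have hptw : ∀ᵐ t ∂μ₀, w t (u t) ≤ essSup g μ₀ * N t (u t) := by
      filter_upwards [hmem, hgEs] with t ht hgt
      calc w t (u t) ≤ g t * N t (u t) := hkey t ht _
        _ ≤ essSup g μ₀ * N t (u t) :=
          mul_le_mul_of_nonneg_right hgt (hN0 t ht _)
    calc (∫ t in I, w t (u t)) = ∫ t, w t (u t) ∂μ₀ := rfl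
      _ ≤ ∫ t, essSup g μ₀ * N t (u t) ∂μ₀ :=
        integral_mono_ae hwint (hNint.const_mul _) hptw
      _ = essSup g μ₀ * ∫ t, N t (u t) ∂μ₀ := integral_const_mul _ _
      _ ≤ essSup g μ₀ * 1 := mul_le_mul_of_nonneg_left hN1 hesspos
      _ = essSup g μ₀ := mul_one _
  have h0S : (0:ℝ) ∈ S := by
    refine ⟨0, integrableOn_zero, ?_, ?_⟩
    · have hz : (fun t => N t ((0 : ℝ → E) t)) =ᵐ[μ₀] (fun _ => (0:ℝ)) :=
        hmem.mono fun t ht => (hNeq t ht 0).2 rfl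
      calc (∫ t in I, N t ((0 : ℝ → E) t)) = ∫ t, (0:ℝ) ∂μ₀ := integral_congr_ae hz
        _ = 0 := integral_zero _ _
        _ ≤ 1 := zero_le_one
    · simp
  have hBddS : BddAbove S := ⟨essSup g μ₀, fun r hr => hupper r hr⟩
  refine le_antisymm (csSup_le ⟨0, h0S⟩ hupper) ?_
  -- lower bound
  by_contra hcon
  push_neg at hcon
  obtain ⟨c, hc1, hc2⟩ := exists_between hcon
  haveI : Nonempty E := ⟨0⟩
  set v : ℕ → E := TopologicalSpace.denseSeq E with hvdef
  have hv : DenseRange v := TopologicalSpace.denseRange_denseSeq E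
  set w' : ℝ → E →L[ℝ] ℝ := hw.1.mk w with hw'def
  have hw'm : StronglyMeasurable w' := hw.1.stronglyMeasurable_mk
  have hww' : w =ᵐ[μ₀] w' := hw.1.ae_eq_mk
  set B : ℕ → Set ℝ := fun n =>
    ((I ∩ (fun t => N (min (max t 0) 1) (v n)) ⁻¹' (Set.Iic 1)) ∩
      (fun t => w' t (v n)) ⁻¹' (Set.Ioi c)) with hBdef
  have hBmeas : ∀ n, MeasurableSet (B n) := by
    intro n
    apply MeasurableSet.inter
    · refine MeasurableSet.inter measurableSet_Icc ?_
      exact (((aux_cont hNc).comp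
        (continuous_id.prodMk continuous_const)).measurable) measurableSet_Iic
    · exact (((ContinuousLinearMap.apply ℝ ℝ (v n)).continuous.comp_stronglyMeasurable
        hw'm).measurable) measurableSet_Ioi
  have hBI : ∀ n, B n ⊆ I := fun n t ht => ht.1.1
  have hBprop : ∀ n, ∀ t ∈ B n, N t (v n) ≤ 1 ∧ c < w' t (v n) := by
    intro n t ht
    refine ⟨?_, ht.2⟩
    have := ht.1.2
    rwa [Set.mem_preimage, Set.mem_Iic, aux_pi_eq ht.1.1] at this
  have hcover : ∀ᵐ t ∂μ₀, c < g t → t ∈ ⋃ n, B n := by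
    filter_upwards [hmem, hww'] with t ht htw hgt
    obtain ⟨r, hr, hcr⟩ := exists_lt_of_lt_csSup ⟨0, hzeroMem t ht⟩ hgt
    obtain ⟨v₀, hv₀1, rfl⟩ := hr
    have hcontN : Continuous (fun x : E => N t x) := by
      have h := (aux_cont hNc).comp
        ((continuous_const (y := t)).prodMk continuous_id)
      simp only [Function.comp_def, id_eq] at h
      rwa [aux_pi_eq ht] at h
    have hU : IsOpen {x : E | N t x < 1 ∧ c < w t x} := by
      have h1 : IsOpen {x : E | N t x < 1} :=
        isOpen_lt hcontN continuous_const
      have h2 : IsOpen {x : E | c < w t x} :=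
        isOpen_lt continuous_const (w t).continuous
      exact h1.inter h2
    have hUne : {x : E | N t x < 1 ∧ c < w t x}.Nonempty := by
      rcases lt_or_ge c 0 with hc0 | hc0
      · exact ⟨0, by rw [(hNeq t ht 0).2 rfl]; exact zero_lt_one, by simpa using hc0⟩
      · have hwv : 0 < w t v₀ := lt_of_le_of_lt hc0 hcr
        set s : ℝ := (c / w t v₀ + 1) / 2 with hsdef
        have hq1 : c / w t v₀ < 1 := (div_lt_one hwv).2 hcr
        have hq0 : 0 ≤ c / w t v₀ := div_nonneg hc0 hwv.le
        have hs1 : s < 1 := by rw [hsdef]; linarith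
        have hs0 : 0 < s := by rw [hsdef]; linarith
        have hsgt : c / w t v₀ < s := by rw [hsdef]; linarith
        refine ⟨s • v₀, ?_, ?_⟩
        · show N t (s • v₀) < 1
          rw [hNsmul t ht, abs_of_pos hs0]
          have := hN0 t ht v₀
          nlinarith
        · show c < w t (s • v₀)
          rw [ContinuousLinearMap.map_smul, smul_eq_mul]
          exact (div_lt_iff₀ hwv).1 hsgt
    obtain ⟨n, hn⟩ := hv.exists_mem_open hU hUne
    refine Set.mem_iUnion.2 ⟨n, ⟨⟨ht, ?_⟩, ?_⟩⟩
    · rw [Set.mem_preimage, Set.mem_Iic, aux_pi_eq ht]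
      exact hn.1.le
    · rw [Set.mem_preimage, Set.mem_Ioi, ← htw]
      exact hn.2
  have hApos : μ₀ {t | c < g t} ≠ 0 := by
    intro h0
    have hle : ∀ᵐ t ∂μ₀, g t ≤ c := by
      rw [ae_iff]
      simpa [not_le] using h0
    have hcb : IsCoboundedUnder (· ≤ ·) (ae μ₀) g :=
      IsCobounded.of_frequently_ge
        (frequently_map.2 ((hmem.mono fun t ht => hg0 t ht).frequently))
    have : essSup g μ₀ ≤ c := by
      rw [hesslim]
      exact limsup_le_of_le hcb hle
    exact absurd (hc2.trans_le this) (lt_irrefl c)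
  have hUnion : μ₀ (⋃ n, B n) ≠ 0 := by
    intro h0
    apply hApos
    have hsub : μ₀ {t | c < g t} ≤ μ₀ (⋃ n, B n) :=
      measure_mono_ae (hcover.mono fun t h => h)
    exact le_antisymm (hsub.trans (le_of_eq h0)) zero_le
  obtain ⟨n, hn⟩ : ∃ n, μ₀ (B n) ≠ 0 := by
    by_contra hall
    push_neg at hall
    exact hUnion (measure_iUnion_null hall)
  set β : ℝ≥0∞ := μ₀ (B n) with hβdef
  have hβtop : β < ⊤ := by
    calc β ≤ μ₀ Set.univ := measure_mono (Set.subset_univ _)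
      _ = 1 := hμuniv
      _ < ⊤ := ENNReal.one_lt_top
  set b : ℝ := β.toReal with hbdef
  have hb : 0 < b := ENNReal.toReal_pos hn hβtop.ne
  set u : ℝ → E := (B n).indicator (fun _ => b⁻¹ • v n) with hudef
  have huInt : IntegrableOn u I volume := by
    show Integrable u μ₀
    rw [hudef, integrable_indicator_iff (hBmeas n)]
    exact integrableOn_const hβtop.ne
  obtain ⟨hNint, hwint⟩ := hInt u huInt
  have heq1 : (fun t => N t (u t)) =ᵐ[μ₀]
      (B n).indicator (fun t => b⁻¹ * N t (v n)) := by
    filter_upwards [hmem] with t ht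
    by_cases htB : t ∈ B n
    · rw [hudef]
      simp only [Set.indicator_of_mem htB]
      rw [hNsmul t ht, abs_of_pos (inv_pos.2 hb)]
    · rw [hudef]
      simp only [Set.indicator_of_notMem htB]
      exact (hNeq t ht 0).2 rfl
  have hint1 : IntegrableOn (fun t => b⁻¹ * N t (v n)) (B n) μ₀ :=
    (integrable_indicator_iff (hBmeas n)).1 ((integrable_congr heq1).1 hNint)
  have hint2 : IntegrableOn (fun _ => b⁻¹) (B n) μ₀ :=
    integrableOn_const hβtop.ne
  have hNle : (∫ t in I, N t (u t)) ≤ 1 := by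
    calc (∫ t, N t (u t) ∂μ₀)
        = ∫ t, (B n).indicator (fun t => b⁻¹ * N t (v n)) t ∂μ₀ :=
          integral_congr_ae heq1
      _ = ∫ t in B n, b⁻¹ * N t (v n) ∂μ₀ := integral_indicator (hBmeas n)
      _ ≤ ∫ t in B n, b⁻¹ ∂μ₀ := by
          refine setIntegral_mono_on hint1 hint2 (hBmeas n) fun t ht => ?_
          have h1 := (hBprop n t ht).1
          calc b⁻¹ * N t (v n) ≤ b⁻¹ * 1 :=
                mul_le_mul_of_nonneg_left h1 (inv_nonneg.2 hb.le)
            _ = b⁻¹ := mul_one _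
      _ = (μ₀ (B n)).toReal • b⁻¹ := setIntegral_const _
      _ = 1 := by
          rw [smul_eq_mul, ← hβdef, ← hbdef, mul_inv_cancel₀ hb.ne']
  have heq2 : (fun t => w t (u t)) =ᵐ[μ₀]
      (B n).indicator (fun t => b⁻¹ * w' t (v n)) := by
    filter_upwards [hww'] with t htw
    by_cases htB : t ∈ B n
    · rw [hudef]
      simp only [Set.indicator_of_mem htB]
      rw [htw, ContinuousLinearMap.map_smul, smul_eq_mul]
    · rw [hudef]
      simp only [Set.indicator_of_notMem htB, map_zero]
  have hint4 : IntegrableOn (fun t => b⁻¹ * w' t (v n)) (B n) μ₀ :=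
    (integrable_indicator_iff (hBmeas n)).1 ((integrable_congr heq2).1 hwint)
  have hint3 : IntegrableOn (fun _ => b⁻¹ * c) (B n) μ₀ :=
    integrableOn_const hβtop.ne
  have hwge : c ≤ ∫ t in I, w t (u t) := by
    calc c = (μ₀ (B n)).toReal • (b⁻¹ * c) := by
          rw [smul_eq_mul, ← hβdef, ← hbdef, ← mul_assoc, mul_inv_cancel₀ hb.ne', one_mul]
      _ = ∫ t in B n, b⁻¹ * c ∂μ₀ := (setIntegral_const _).symm
      _ ≤ ∫ t in B n, b⁻¹ * w' t (v n) ∂μ₀ := by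
          refine setIntegral_mono_on hint3 hint4 (hBmeas n) fun t ht => ?_
          exact mul_le_mul_of_nonneg_left (hBprop n t ht).2.le (inv_nonneg.2 hb.le)
      _ = ∫ t, (B n).indicator (fun t => b⁻¹ * w' t (v n)) t ∂μ₀ :=
          (integral_indicator (hBmeas n)).symm
      _ = ∫ t, w t (u t) ∂μ₀ := (integral_congr_ae heq2).symm
  have hmemS : (∫ t in I, w t (u t)) ∈ S := ⟨u, huInt, hNle, rfl⟩
  have hfin := le_csSup hBddS hmemS
  linarith
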